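/- If r(t) = (x(t), y(t)) is a solution of the planar Kepler equation r'' = -r/|r|^3 with nonzero angular momentum M = x y' - y x', then there exist constants a, b, c with c = 1/M^2 such that a·x(t) + b·y(t) + c·√(x(t)^2+y(t)^2) = 1 for all t. -/

import Mathlib

/-- A solution of the planar Kepler equation with nonzero angular
momentum lies on a curve `a x + b y + c √(x²+y²) = 1` with `c = 1/M²`. -/
theorem kepler_orbit_is_conic
    (x y x' y' x'' y'' : ℝ → ℝ) (M : ℝ) (hM : M ≠ 0)
    (hx' : ∀ t, HasDerivAt x (x' t) t) (hy' : ∀ t, HasDerivAt y (y' t) t)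
    (hx'' : ∀ t, HasDerivAt x' (x'' t) t) (hy'' : ∀ t, HasDerivAt y' (y'' t) t)
    (hpos : ∀ t, x t ^ 2 + y t ^ 2 ≠ 0)
    (hODEx : ∀ t, x'' t = - x t / (x t ^ 2 + y t ^ 2) ^ ((3:ℝ)/2))
    (hODEy : ∀ t, y'' t = - y t / (x t ^ 2 + y t ^ 2) ^ ((3:ℝ)/2))
    (hang : ∀ t, x t * y' t - y t * x' t = M) :
    ∃ a b c : ℝ, c = 1 / M ^ 2 ∧
      ∀ t, a * x t + b * y t + c * Real.sqrt (x t ^ 2 + y t ^ 2) = 1 := by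
  set Q : ℝ → ℝ := fun t => x t ^ 2 + y t ^ 2 with hQdef
  have hQpos : ∀ t, 0 < Q t := fun t => lt_of_le_of_ne (by positivity) (Ne.symm (hpos t))
  set r : ℝ → ℝ := fun t => Real.sqrt (Q t) with hrdef
  have hrpos : ∀ t, 0 < r t := fun t => Real.sqrt_pos.mpr (hQpos t)
  have hr2 : ∀ t, r t ^ 2 = Q t := fun t => Real.sq_sqrt (hQpos t).le
  have hQ32 : ∀ t, Q t ^ ((3:ℝ)/2) = r t ^ 3 := by
    intro t
    rw [show (3:ℝ)/2 = (1/2) * 3 by ring, Real.rpow_mul (hQpos t).le,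
      ← Real.sqrt_eq_rpow, ← Real.rpow_natCast (Real.sqrt (Q t)) 3]
    norm_num
  -- derivative of r
  have hr' : ∀ t, HasDerivAt r ((x t * x' t + y t * y' t) / r t) t := by
    intro t
    have hQ' : HasDerivAt Q (2 * x t ^ 1 * x' t + 2 * y t ^ 1 * y' t) t :=
      ((hx' t).pow 2).add ((hy' t).pow 2)
    have hs := (Real.hasDerivAt_sqrt (hQpos t).ne').comp t hQ'
    refine hs.congr_deriv ?_
    symm
    field_simp [hrdef]
    ring
  -- first component of LRL vector is constant
  have hd1 : ∀ t, HasDerivAt (fun t => y' t * M - x t / r t) 0 t := by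
    intro t
    have h := ((hy'' t).mul_const M).sub ((hx' t).div (hr' t) (hrpos t).ne')
    refine h.congr_deriv ?_
    symm
    have hy2 := hODEy t
    rw [show x t ^ 2 + y t ^ 2 = Q t from rfl, hQ32 t] at hy2
    rw [hy2]
    have hrne := (hrpos t).ne'
    have hQe : x t ^ 2 + y t ^ 2 = r t ^ 2 := (hr2 t).symm
    have ha := hang t
    field_simp
    linear_combination (-(y t)) * ha + (-(x' t)) * hQe
  have hd2 : ∀ t, HasDerivAt (fun t => x' t * M + y t / r t) 0 t := by
    intro t
    have h := ((hx'' t).mul_const M).add ((hy' t).div (hr' t) (hrpos t).ne')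
    refine h.congr_deriv ?_
    symm
    have hx2 := hODEx t
    rw [show x t ^ 2 + y t ^ 2 = Q t from rfl, hQ32 t] at hx2
    rw [hx2]
    have hrne := (hrpos t).ne'
    have hQe : x t ^ 2 + y t ^ 2 = r t ^ 2 := (hr2 t).symm
    have ha := hang t
    field_simp
    linear_combination (-(x t)) * ha + (y' t) * hQe
  have hc1 : ∀ t, y' t * M - x t / r t = y' 0 * M - x 0 / r 0 := by
    intro t
    exact is_const_of_deriv_eq_zero (fun s => (hd1 s).differentiableAt)
      (fun s => (hd1 s).deriv) t 0
  have hc2 : ∀ t, x' t * M + y t / r t = x' 0 * M + y 0 / r 0 := by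
    intro t
    exact is_const_of_deriv_eq_zero (fun s => (hd2 s).differentiableAt)
      (fun s => (hd2 s).deriv) t 0
  set c1 : ℝ := y' 0 * M - x 0 / r 0 with hc1def
  set c2 : ℝ := x' 0 * M + y 0 / r 0 with hc2def
  refine ⟨c1 / M ^ 2, -c2 / M ^ 2, 1 / M ^ 2, rfl, fun t => ?_⟩
  have key : x t * c1 - y t * c2 = M ^ 2 - r t := by
    rw [← hc1 t, ← hc2 t]
    have hrne := (hrpos t).ne'
    have hQe : x t ^ 2 + y t ^ 2 = r t ^ 2 := (hr2 t).symm
    have ha := hang t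
    field_simp
    linear_combination (M * r t) * ha - hQe
  have hrt : Real.sqrt (x t ^ 2 + y t ^ 2) = r t := rfl
  rw [hrt]
  have hM2 : M ^ 2 ≠ 0 := pow_ne_zero 2 hM
  field_simp
  linarith [key]
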